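/- Suppose p ∈ ℝ² with ‖p − p_o‖ > r_o satisfies ⟨p − p_o, p_o − p_d⟩ = ‖p − p_o‖·‖p_o − p_d‖. Then for every θ̄ ∈ ℝ, 𝒱_nav(p,0) − 𝒱_nav(p,θ̄) = ‖p − p_o‖·‖p_o − p_d‖·(1 − cos θ̄) − (γ_θ/2)·θ̄². -/

import Mathlib

open Real Filter
open scoped RealInnerProductSpace Topology Matrix

noncomputable section

/-- The Euclidean plane. -/
abbrev E2 : Type := EuclideanSpace ℝ (Fin 2)

/-- The planar rotation matrix `R(θ)`. -/
def RotM (θ : ℝ) : Matrix (Fin 2) (Fin 2) ℝ :=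
  !![Real.cos θ, -Real.sin θ; Real.sin θ, Real.cos θ]

/-- The matrix `Δ = [[0,-1],[1,0]]`. -/
def DeltaM : Matrix (Fin 2) (Fin 2) ℝ := !![0, -1; 1, 0]

/-- Reinterpret a plain vector as a point of the Euclidean plane. -/
def toE2 (v : Fin 2 → ℝ) : E2 := (WithLp.equiv 2 (Fin 2 → ℝ)).symm v

/-- Reinterpret a point of the Euclidean plane as a plain vector. -/
def fromE2 (p : E2) : Fin 2 → ℝ := WithLp.equiv 2 (Fin 2 → ℝ) p

/-- A `2×2` matrix acting on a point of the Euclidean plane. -/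
def mulV (M : Matrix (Fin 2) (Fin 2) ℝ) (p : E2) : E2 := toE2 (M.mulVec (fromE2 p))

/-- The barrier function `φ`. -/
def phi (rs z : ℝ) : ℝ := if z ≤ rs then (z - rs) ^ 2 * Real.log (rs / z) else 0

/-- The derivative `φ'` of the barrier function. -/
def phi' (rs z : ℝ) : ℝ :=
  if z ≤ rs then 2 * (z - rs) * Real.log (rs / z) - (z - rs) ^ 2 / z else 0

/-- Distance to the obstacle, `d_o(p) = ‖p - p_o‖ - r_o`. -/
def dO (po : E2) (ro : ℝ) (p : E2) : ℝ := ‖p - po‖ - ro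

/-- The free space `X_p = {p : ‖p - p_o‖ ≥ r_o + ε}`. -/
def Xp (po : E2) (ro ε : ℝ) : Set E2 := {p | ro + ε ≤ ‖p - po‖}

/-- The navigation function `V_nav`. -/
def Vnav (po pd : E2) (ro ϱ rs : ℝ) (p : E2) : ℝ :=
  (1 / 2) * ‖p - pd‖ ^ 2 + ϱ * phi rs (dO po ro p)

/-- The gradient `∇V_nav(p) = p - p_d + ϱ φ'(d_o(p)) (p - p_o)/‖p - p_o‖`. -/
def gradVnav (po pd : E2) (ro ϱ rs : ℝ) (p : E2) : E2 :=
  (p - pd) + ((ϱ * phi' rs (dO po ro p)) / ‖p - po‖) • (p - po)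

/-- The transformation `T(p,θ) = p_o + R(θ)(p - p_o)`. -/
def Tmap (po : E2) (p : E2) (θ : ℝ) : E2 := po + mulV (RotM θ) (p - po)

/-- The modified navigation function `𝒱_nav`. -/
def Vnav2 (po pd : E2) (ro ϱ rs γθ : ℝ) (p : E2) (θ : ℝ) : ℝ :=
  (1 / 2) * ‖Tmap po p θ - pd‖ ^ 2 + ϱ * phi rs (dO po ro p) + (γθ / 2) * θ ^ 2

/-- The map `σ(θ) = (I₂ - R(θ))ᵀ (p_o - p_d)`. -/
def sigmaFn (po pd : E2) (θ : ℝ) : E2 := mulV ((1 - RotM θ)ᵀ) (po - pd)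

set_option maxHeartbeats 1000000 in
/-- If `‖p - p_o‖ > r_o` and `⟨p - p_o, p_o - p_d⟩ = ‖p - p_o‖ ‖p_o - p_d‖`,
then for every `θ̄`,
`𝒱_nav(p,0) - 𝒱_nav(p,θ̄) = ‖p - p_o‖ ‖p_o - p_d‖ (1 - cos θ̄) - (γ_θ/2) θ̄²`. -/
theorem statement_15 (po pd : E2) (ro ϱ rs γθ : ℝ)
    (hro : 0 < ro) (hϱ : 0 < ϱ) (hrs : 0 < rs) (hγθ : 0 < γθ)
    (p : E2) (hp : ro < ‖p - po‖)
    (h : ⟪p - po, po - pd⟫ = ‖p - po‖ * ‖po - pd‖) (θb : ℝ) :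
    Vnav2 po pd ro ϱ rs γθ p 0 - Vnav2 po pd ro ϱ rs γθ p θb
      = ‖p - po‖ * ‖po - pd‖ * (1 - Real.cos θb) - (γθ / 2) * θb ^ 2 := by
  -- coordinates
  set a := p 0 - po 0 with ha
  set b := p 1 - po 1 with hb
  set c := po 0 - pd 0 with hc
  set d := po 1 - pd 1 with hd
  have hvsub0 : (p - po) 0 = a := rfl
  have hvsub1 : (p - po) 1 = b := rfl
  have hwsub0 : (po - pd) 0 = c := rfl
  have hwsub1 : (po - pd) 1 = d := rfl
  have hnormsq : ∀ x : E2, ‖x‖ ^ 2 = x 0 ^ 2 + x 1 ^ 2 := by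
    intro x
    rw [EuclideanSpace.norm_eq, Real.sq_sqrt (by positivity)]
    simp [Fin.sum_univ_two, sq_abs]
  have hnv : ‖p - po‖ = Real.sqrt (a ^ 2 + b ^ 2) := by
    rw [EuclideanSpace.norm_eq]; congr 1
    simp [Fin.sum_univ_two, sq_abs, hvsub0, hvsub1]
    rfl
  have hnw : ‖po - pd‖ = Real.sqrt (c ^ 2 + d ^ 2) := by
    rw [EuclideanSpace.norm_eq]; congr 1
    simp [Fin.sum_univ_two, sq_abs, hwsub0, hwsub1]
    rfl
  have hinner : a * c + b * d = ‖p - po‖ * ‖po - pd‖ := by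
    rw [← h]
    simp [PiLp.inner_apply, RCLike.inner_apply, Fin.sum_univ_two, hvsub0, hvsub1,
      hwsub0, hwsub1, mul_comm]
    rfl
  -- Cauchy-Schwarz equality forces ad - bc = 0
  have hcross : a * d - b * c = 0 := by
    have h2 : (a * c + b * d) ^ 2 = (a ^ 2 + b ^ 2) * (c ^ 2 + d ^ 2) := by
      rw [hinner, hnv, hnw, mul_pow, Real.sq_sqrt (by positivity),
        Real.sq_sqrt (by positivity)]
    nlinarith [sq_nonneg (a * d - b * c)]
  -- components of Tmap
  have hT : ∀ θ : ℝ, ‖Tmap po p θ - pd‖ ^ 2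
      = (Real.cos θ * a - Real.sin θ * b + c) ^ 2
        + (Real.sin θ * a + Real.cos θ * b + d) ^ 2 := by
    intro θ
    rw [hnormsq]
    have h0 : (Tmap po p θ - pd) 0 = Real.cos θ * a - Real.sin θ * b + c := by
      simp only [Tmap, mulV, toE2, fromE2, RotM]
      show po 0 + _ - pd 0 = _
      simp [Matrix.mulVec, dotProduct, Fin.sum_univ_two, Matrix.vecHead, Matrix.vecTail, hvsub0, hvsub1, hc, ha, hb]
      ring
    have h1 : (Tmap po p θ - pd) 1 = Real.sin θ * a + Real.cos θ * b + d := by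
      simp only [Tmap, mulV, toE2, fromE2, RotM]
      show po 1 + _ - pd 1 = _
      simp [Matrix.mulVec, dotProduct, Fin.sum_univ_two, Matrix.vecHead, Matrix.vecTail, hvsub0, hvsub1, hd, ha, hb]
      ring
    rw [h0, h1]
  have hpyth : Real.sin θb ^ 2 + Real.cos θb ^ 2 = 1 := Real.sin_sq_add_cos_sq θb
  simp only [Vnav2, hT, Real.cos_zero, Real.sin_zero, ← hinner]
  linear_combination (-(a ^ 2 + b ^ 2) / 2) * hpyth + (-Real.sin θb) * hcross
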